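/- For every time step t, state ŝ, action â, and randomized Markov policy π, the partial derivative of the MMDP return with respect to the policy entry π_t(ŝ,â) equals the sum over models m of the product of the model weight and the state–action value: ∂ρ(π)/∂π_t(ŝ,â) = Σ_{m∈M} b^π_{t,m}(ŝ) · q^π_{t,m}(ŝ,â). -/

import Mathlib

set_option autoImplicit false

open Finset

noncomputable section

/-- Value function of a randomized Markov policy in one model of an MMDP, computed with
`n` remaining steps; `mmdpVAux T p r pol n` corresponds to the value at time `T + 1 - n`
(so `n = 0` is the zero value at time `T + 1`). -/
def mmdpVAux {S A : Type*} [Fintype S] [Fintype A] (T : ℕ)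
    (p : S → A → S → ℝ) (r : ℕ → S → A → ℝ) (pol : ℕ → S → A → ℝ) : ℕ → S → ℝ
  | 0 => fun _ => 0
  | n + 1 => fun s => ∑ a : A, pol (T - n) s a *
      (r (T - n) s a + ∑ s' : S, p s a s' * mmdpVAux T p r pol n s')

/-- The value function `v^π_{t,m}` (for the model with transitions `p` and rewards `r`). -/
def mmdpV {S A : Type*} [Fintype S] [Fintype A] (T : ℕ)
    (p : S → A → S → ℝ) (r : ℕ → S → A → ℝ) (pol : ℕ → S → A → ℝ) (t : ℕ) : S → ℝ :=
  mmdpVAux T p r pol (T + 1 - t)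

/-- The state-action value function `q^π_{t,m}`:
`q^π_{t,m}(s,a) = r^m_t(s,a) + Σ_{s'} p^m(s'|s,a) · v^π_{t+1,m}(s')`. -/
def mmdpQ {S A : Type*} [Fintype S] [Fintype A] (T : ℕ)
    (p : S → A → S → ℝ) (r : ℕ → S → A → ℝ) (pol : ℕ → S → A → ℝ) (t : ℕ) (s : S) (a : A) : ℝ :=
  r t s a + ∑ s' : S, p s a s' * mmdpV T p r pol (t + 1) s'

/-- Forward recursion for the model weights of one model, with initial weight `w0`;
the argument is `t - 1`, so `mmdpBAux p pol w0 0 = w0` is the weight at time `1`. -/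
def mmdpBAux {S A : Type*} [Fintype S] [Fintype A]
    (p : S → A → S → ℝ) (pol : ℕ → S → A → ℝ) (w0 : S → ℝ) : ℕ → S → ℝ
  | 0 => w0
  | k + 1 => fun s' => ∑ s : S, ∑ a : A, p s a s' * pol (k + 1) s a * mmdpBAux p pol w0 k s

/-- The model weight `b^π_{t,m}(s)` for the model with transitions `p`, initial weight
`w0 = λ_m · μ`. -/
def mmdpB {S A : Type*} [Fintype S] [Fintype A]
    (p : S → A → S → ℝ) (pol : ℕ → S → A → ℝ) (w0 : S → ℝ) (t : ℕ) : S → ℝ :=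
  mmdpBAux p pol w0 (t - 1)

/-- The MMDP return `ρ(π) = Σ_m Σ_s b^π_{1,m}(s) · v^π_{1,m}(s)` with
`b^π_{1,m}(s) = λ_m · μ(s)`. -/
def mmdpRet {S A M : Type*} [Fintype S] [Fintype A] [Fintype M] (T : ℕ)
    (p : M → S → A → S → ℝ) (r : M → ℕ → S → A → ℝ) (μ : S → ℝ) (lam : M → ℝ)
    (pol : ℕ → S → A → ℝ) : ℝ :=
  ∑ m : M, ∑ s : S, lam m * μ s * mmdpV T (p m) (r m) pol 1 s

/-- The derivative of the value function `k` steps before time `t` with respect to the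
policy entry at `(t, s₀, a₀)`; `c` is the state-action value `q^π_t(s₀,a₀)`. -/
def mmdpD {S A : Type*} [Fintype S] [Fintype A] [DecidableEq S]
    (p : S → A → S → ℝ) (pol : ℕ → S → A → ℝ) (t : ℕ) (s₀ : S) (c : ℝ) : ℕ → S → ℝ
  | 0 => fun s => if s = s₀ then c else 0
  | k + 1 => fun s => ∑ a : A, pol (t - (k + 1)) s a *
      ∑ s' : S, p s a s' * mmdpD p pol t s₀ c k s'

lemma mmdp_vaux_perturb_eq {S A : Type*} [Fintype S] [Fintype A]
    [DecidableEq S] [DecidableEq A] (T : ℕ)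
    (p : S → A → S → ℝ) (r : ℕ → S → A → ℝ) (pol : ℕ → S → A → ℝ)
    (t : ℕ) (s₀ : S) (a₀ : A) (x : ℝ) :
    ∀ n, n + t ≤ T →
      mmdpVAux T p r (fun t' s a => if t' = t ∧ s = s₀ ∧ a = a₀ then x else pol t' s a) n
        = mmdpVAux T p r pol n := by
  intro n
  induction n with
  | zero => intro _; rfl
  | succ n ih =>
    intro h
    have hne : ¬ (T - n = t) := by omega
    funext s
    simp only [mmdpVAux, hne, false_and, if_false, ih (by omega)]

lemma mmdp_vaux_hasDerivAt {S A : Type*} [Fintype S] [Fintype A]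
    [DecidableEq S] [DecidableEq A] (T : ℕ)
    (p : S → A → S → ℝ) (r : ℕ → S → A → ℝ) (pol : ℕ → S → A → ℝ)
    (t : ℕ) (ht1 : 1 ≤ t) (htT : t ≤ T) (s₀ : S) (a₀ : A) :
    ∀ k, k < t → ∀ s : S,
      HasDerivAt
        (fun x : ℝ => mmdpVAux T p r
          (fun t' s a => if t' = t ∧ s = s₀ ∧ a = a₀ then x else pol t' s a)
          (T + 1 - t + k) s)
        (mmdpD p pol t s₀ (mmdpQ T p r pol t s₀ a₀) k s)
        (pol t s₀ a₀) := by
  intro k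
  induction k with
  | zero =>
    intro _ s
    have hn : T + 1 - t + 0 = (T - t) + 1 := by omega
    have htt : T - (T - t) = t := by omega
    have hfun : (fun x : ℝ => mmdpVAux T p r
          (fun t' s a => if t' = t ∧ s = s₀ ∧ a = a₀ then x else pol t' s a)
          (T + 1 - t + 0) s)
        = fun x : ℝ => ∑ a : A, (if s = s₀ ∧ a = a₀ then x else pol t s a) *
            mmdpQ T p r pol t s a := by
      funext x
      rw [hn]
      simp only [mmdpVAux, htt,
        mmdp_vaux_perturb_eq T p r pol t s₀ a₀ x (T - t) (by omega)]
      refine Finset.sum_congr rfl fun a _ => ?_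
      have : mmdpQ T p r pol t s a
          = r t s a + ∑ s' : S, p s a s' * mmdpVAux T p r pol (T - t) s' := by
        have : T + 1 - (t + 1) = T - t := by omega
        simp [mmdpQ, mmdpV, this]
      rw [this]
      simp
    rw [hfun]
    have hder : HasDerivAt
        (fun x : ℝ => ∑ a : A, (if s = s₀ ∧ a = a₀ then x else pol t s a) *
            mmdpQ T p r pol t s a)
        (∑ a : A, (if s = s₀ ∧ a = a₀ then (1:ℝ) else 0) * mmdpQ T p r pol t s a)
        (pol t s₀ a₀) := by
      refine HasDerivAt.fun_sum fun a _ => ?_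
      by_cases h : s = s₀ ∧ a = a₀
      · obtain ⟨hs, ha⟩ := h
        subst hs; subst ha
        simp only [and_self, if_true]
        simpa using (hasDerivAt_id _).mul_const (mmdpQ T p r pol t s a)
      · simp only [if_neg h]
        simpa using (hasDerivAt_const (pol t s₀ a₀) (pol t s a * mmdpQ T p r pol t s a))
    convert hder using 1
    by_cases hs : s = s₀
    · subst hs
      simp [mmdpD]
    · simp [mmdpD, hs]
  | succ k ih =>
    intro hk s
    have hn : T + 1 - t + (k + 1) = (T + 1 - t + k) + 1 := by omega
    have htt : T - (T + 1 - t + k) = t - (k + 1) := by omega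
    have hne : ¬ (t - (k + 1) = t) := by omega
    have hfun : (fun x : ℝ => mmdpVAux T p r
          (fun t' s a => if t' = t ∧ s = s₀ ∧ a = a₀ then x else pol t' s a)
          (T + 1 - t + (k + 1)) s)
        = fun x : ℝ => ∑ a : A, pol (t - (k + 1)) s a *
            (r (t - (k + 1)) s a + ∑ s' : S, p s a s' * mmdpVAux T p r
              (fun t' s a => if t' = t ∧ s = s₀ ∧ a = a₀ then x else pol t' s a)
              (T + 1 - t + k) s') := by
      funext x
      rw [hn]
      simp only [mmdpVAux, htt, hne, false_and, if_false]
    rw [hfun]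
    have hder : HasDerivAt
        (fun x : ℝ => ∑ a : A, pol (t - (k + 1)) s a *
            (r (t - (k + 1)) s a + ∑ s' : S, p s a s' * mmdpVAux T p r
              (fun t' s a => if t' = t ∧ s = s₀ ∧ a = a₀ then x else pol t' s a)
              (T + 1 - t + k) s'))
        (∑ a : A, pol (t - (k + 1)) s a *
            (0 + ∑ s' : S, p s a s' *
              mmdpD p pol t s₀ (mmdpQ T p r pol t s₀ a₀) k s'))
        (pol t s₀ a₀) := by
      refine HasDerivAt.fun_sum fun a _ => ?_
      refine HasDerivAt.const_mul _ ?_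
      refine (hasDerivAt_const _ _).add ?_
      exact HasDerivAt.fun_sum fun s' _ => (ih (by omega) s').const_mul _
    convert hder using 1
    rw [mmdpD]
    simp only [zero_add]

lemma mmdp_sum_b_mul_D {S A : Type*} [Fintype S] [Fintype A] [DecidableEq S]
    (p : S → A → S → ℝ) (pol : ℕ → S → A → ℝ) (w0 : S → ℝ)
    (t : ℕ) (s₀ : S) (c : ℝ) :
    ∀ k, k ≤ t - 1 →
      ∑ s : S, mmdpBAux p pol w0 (t - 1 - k) s * mmdpD p pol t s₀ c k s
        = mmdpBAux p pol w0 (t - 1) s₀ * c := by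
  intro k
  induction k with
  | zero =>
    intro _
    simp [mmdpD, mul_ite]
  | succ k ih =>
    intro hk
    rw [← ih (by omega)]
    have h1 : t - 1 - k = (t - 1 - (k + 1)) + 1 := by omega
    have h2 : t - 1 - (k + 1) + 1 = t - (k + 1) := by omega
    rw [h1]
    have hLHS : ∑ s : S, mmdpBAux p pol w0 (t - 1 - (k + 1)) s * mmdpD p pol t s₀ c (k + 1) s
        = ∑ s : S, ∑ a : A, ∑ s' : S,
            p s a s' * pol (t - (k + 1)) s a * mmdpBAux p pol w0 (t - 1 - (k + 1)) s
              * mmdpD p pol t s₀ c k s' := by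
      refine Finset.sum_congr rfl fun s _ => ?_
      rw [mmdpD, Finset.mul_sum]
      refine Finset.sum_congr rfl fun a _ => ?_
      rw [Finset.mul_sum, Finset.mul_sum]
      refine Finset.sum_congr rfl fun s' _ => ?_
      ring
    have hRHS : ∑ s' : S, mmdpBAux p pol w0 (t - 1 - (k + 1) + 1) s' * mmdpD p pol t s₀ c k s'
        = ∑ s' : S, ∑ s : S, ∑ a : A,
            p s a s' * pol (t - (k + 1)) s a * mmdpBAux p pol w0 (t - 1 - (k + 1)) s
              * mmdpD p pol t s₀ c k s' := by
      refine Finset.sum_congr rfl fun s' _ => ?_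
      rw [mmdpBAux, h2, Finset.sum_mul]
      refine Finset.sum_congr rfl fun s _ => ?_
      rw [Finset.sum_mul]
    rw [hLHS, hRHS]
    calc ∑ s : S, ∑ a : A, ∑ s' : S,
            p s a s' * pol (t - (k + 1)) s a * mmdpBAux p pol w0 (t - 1 - (k + 1)) s
              * mmdpD p pol t s₀ c k s'
        = ∑ s : S, ∑ s' : S, ∑ a : A,
            p s a s' * pol (t - (k + 1)) s a * mmdpBAux p pol w0 (t - 1 - (k + 1)) s
              * mmdpD p pol t s₀ c k s' :=
          Finset.sum_congr rfl fun s _ => Finset.sum_comm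
      _ = ∑ s' : S, ∑ s : S, ∑ a : A,
            p s a s' * pol (t - (k + 1)) s a * mmdpBAux p pol w0 (t - 1 - (k + 1)) s
              * mmdpD p pol t s₀ c k s' := Finset.sum_comm

/-- Policy gradient of an MMDP: for every time step `t`, state `s₀`, action `a₀`, and
randomized Markov policy `pol`, the partial derivative of the return with respect to
the policy entry `pol t s₀ a₀` equals `Σ_m b^π_{t,m}(s₀) · q^π_{t,m}(s₀,a₀)`. -/
theorem mmdp_policy_gradient {S A M : Type*} [Fintype S] [Fintype A] [Fintype M]
    [DecidableEq S] [DecidableEq A] (T : ℕ)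
    (p : M → S → A → S → ℝ) (r : M → ℕ → S → A → ℝ) (μ : S → ℝ) (lam : M → ℝ)
    (hp0 : ∀ m s a s', 0 ≤ p m s a s') (hp1 : ∀ m s a, ∑ s' : S, p m s a s' = 1)
    (hμ0 : ∀ s, 0 ≤ μ s) (hμ1 : ∑ s : S, μ s = 1)
    (hlam0 : ∀ m, 0 ≤ lam m) (hlam1 : ∑ m : M, lam m = 1)
    (pol : ℕ → S → A → ℝ)
    (hpol0 : ∀ t s a, 0 ≤ pol t s a) (hpol1 : ∀ t s, ∑ a : A, pol t s a = 1)
    (t : ℕ) (ht1 : 1 ≤ t) (htT : t ≤ T) (s₀ : S) (a₀ : A) :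
    HasDerivAt
      (fun x : ℝ => mmdpRet T p r μ lam
        (fun t' s a => if t' = t ∧ s = s₀ ∧ a = a₀ then x else pol t' s a))
      (∑ m : M, mmdpB (p m) pol (fun s => lam m * μ s) t s₀ * mmdpQ T (p m) (r m) pol t s₀ a₀)
      (pol t s₀ a₀) := by
  have hT : T + 1 - 1 = T + 1 - t + (t - 1) := by omega
  have hfun : (fun x : ℝ => mmdpRet T p r μ lam
        (fun t' s a => if t' = t ∧ s = s₀ ∧ a = a₀ then x else pol t' s a))
      = fun x : ℝ => ∑ m : M, ∑ s : S, lam m * μ s * mmdpVAux T (p m) (r m)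
          (fun t' s a => if t' = t ∧ s = s₀ ∧ a = a₀ then x else pol t' s a)
          (T + 1 - t + (t - 1)) s := by
    funext x
    simp only [mmdpRet, mmdpV, hT]
  rw [hfun]
  have hder : HasDerivAt
      (fun x : ℝ => ∑ m : M, ∑ s : S, lam m * μ s * mmdpVAux T (p m) (r m)
          (fun t' s a => if t' = t ∧ s = s₀ ∧ a = a₀ then x else pol t' s a)
          (T + 1 - t + (t - 1)) s)
      (∑ m : M, ∑ s : S, lam m * μ s *
        mmdpD (p m) pol t s₀ (mmdpQ T (p m) (r m) pol t s₀ a₀) (t - 1) s)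
      (pol t s₀ a₀) := by
    refine HasDerivAt.fun_sum fun m _ => HasDerivAt.fun_sum fun s _ => ?_
    exact (mmdp_vaux_hasDerivAt T (p m) (r m) pol t ht1 htT s₀ a₀ (t - 1)
      (by omega) s).const_mul _
  convert hder using 1
  refine Finset.sum_congr rfl fun m _ => ?_
  have := mmdp_sum_b_mul_D (p m) pol (fun s => lam m * μ s) t s₀
    (mmdpQ T (p m) (r m) pol t s₀ a₀) (t - 1) le_rfl
  simp only [Nat.sub_self, mmdpBAux] at this
  rw [mmdpB, ← this]
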